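/- arXiv:1207.3031 — 3 statements merged into one kernel-verified Lean document; each statement's English description precedes it below -/
import Mathlib

section
/- (Regret bound for lazy projection.) Let W ⊆ ℝ^d be nonempty, closed, and convex, let w* ∈ W, let a > 0, and let g(1),…,g(T) ∈ ℝ^d with ‖g(t)‖ ≤ L. Define z(1) = w(1) ∈ W, and for t ≥ 1 set z(t+1) = z(t) - a·g(t) and w(t+1) = Π_W(z(t+1)), where Π_W is the Euclidean projection onto W. Then ∑_{t=1}^T ⟨g(t), w(t) - w*⟩ ≤ ‖w(1) - w*‖²/(2a) + T·a·L²/2. -/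
open RealInnerProductSpace Finset

set_option maxHeartbeats 1000000 in
/-- Regret bound for the lazy projection algorithm (Zinkevich). -/
theorem stmt_5 {d : ℕ} (W : Set (EuclideanSpace ℝ (Fin d)))
    (hWne : W.Nonempty) (hWc : IsClosed W) (hW : Convex ℝ W)
    (proj : EuclideanSpace ℝ (Fin d) → EuclideanSpace ℝ (Fin d))
    (hproj : ∀ x, proj x ∈ W ∧ ∀ u ∈ W, ‖proj x - x‖ ≤ ‖u - x‖)
    (wstar : EuclideanSpace ℝ (Fin d)) (hwstar : wstar ∈ W)
    (a L : ℝ) (ha : 0 < a) (T : ℕ)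
    (g z w : ℕ → EuclideanSpace ℝ (Fin d))
    (hg : ∀ t ∈ Finset.Icc 1 T, ‖g t‖ ≤ L)
    (hw1 : w 1 ∈ W) (hz1 : z 1 = w 1)
    (hz : ∀ t ≥ 1, z (t + 1) = z t - a • g t)
    (hwp : ∀ t ≥ 1, w (t + 1) = proj (z (t + 1))) :
    ∑ t ∈ Finset.Icc 1 T, ⟪g t, w t - wstar⟫ ≤
      ‖w 1 - wstar‖ ^ 2 / (2 * a) + (T : ℝ) * a * L ^ 2 / 2 := by
  -- variational inequality for the projection
  have hvar : ∀ θ, ∀ u ∈ W, ⟪θ - proj θ, u - proj θ⟫ ≤ 0 := by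
    intro θ u hu
    haveI : Nonempty W := hWne.to_subtype
    have hinf : ‖θ - proj θ‖ = ⨅ x : W, ‖θ - x‖ := by
      refine le_antisymm (le_ciInf fun x => ?_) ?_
      · rw [norm_sub_rev θ (proj θ), norm_sub_rev θ (x : EuclideanSpace ℝ (Fin d))]
        exact (hproj θ).2 x x.2
      · exact ciInf_le ⟨0, fun _ ⟨_, h⟩ => h ▸ norm_nonneg _⟩
          (⟨proj θ, (hproj θ).1⟩ : W)
    exact (norm_eq_iInf_iff_real_inner_le_zero hW (hproj θ).1).1 hinf u hu
  set Ψ : EuclideanSpace ℝ (Fin d) → ℝ :=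
    fun θ => ‖θ‖ ^ 2 / 2 - ‖proj θ - θ‖ ^ 2 / 2 with hΨ
  -- the descent lemma
  have hdesc : ∀ θ v, Ψ (θ - v) ≤ Ψ θ - ⟪v, proj θ⟫ + ‖v‖ ^ 2 / 2 := by
    intro θ v
    set p := proj θ with hp
    set q := proj (θ - v) with hq
    have h1 : 0 ≤ ⟪q - p, p - θ⟫ := by
      have := hvar θ q (hproj (θ - v)).1
      have hc : ⟪θ - p, q - p⟫ = -⟪q - p, p - θ⟫ := by
        rw [real_inner_comm]
        simp [inner_sub_left, inner_sub_right]
      linarith [hc ▸ this]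
    have hcs : -⟪q - p, v⟫ ≤ ‖q - p‖ * ‖v‖ := by
      have h := abs_real_inner_le_norm (q - p) v
      have := neg_abs_le ⟪q - p, v⟫
      linarith
    have hsq : 2 * (‖q - p‖ * ‖v‖) ≤ ‖q - p‖ ^ 2 + ‖v‖ ^ 2 := by
      nlinarith [sq_nonneg (‖q - p‖ - ‖v‖)]
    have e1 : ‖θ - v‖ ^ 2 = ‖θ‖ ^ 2 - 2 * ⟪θ, v⟫ + ‖v‖ ^ 2 := norm_sub_sq_real θ v
    have e2 : q - (θ - v) = (q - p) + ((p - θ) + v) := by abel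
    have e3 : ‖q - (θ - v)‖ ^ 2 =
        ‖q - p‖ ^ 2 + 2 * (⟪q - p, p - θ⟫ + ⟪q - p, v⟫) + (‖p - θ‖ ^ 2 + 2 * ⟪p - θ, v⟫ + ‖v‖ ^ 2) := by
      rw [e2, norm_add_sq_real, norm_add_sq_real, inner_add_right]
    have e4 : ⟪p - θ, v⟫ = ⟪v, p⟫ - ⟪θ, v⟫ := by
      rw [inner_sub_left, real_inner_comm p v]
    have e5 : ‖p - θ‖ = ‖θ - p‖ := norm_sub_rev _ _
    simp only [hΨ]
    rw [e1, e3]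
    nlinarith [h1, hcs, hsq, e4]
  -- proj (z t) = w t for t ≥ 1
  have hwz : ∀ t ≥ 1, proj (z t) = w t := by
    intro t ht
    rcases Nat.exists_eq_add_of_le ht with ⟨s, rfl⟩
    rcases Nat.eq_zero_or_pos s with rfl | hs
    · rw [hz1]
      have h0 := (hproj (w 1)).2 (w 1) hw1
      simp only [sub_self, norm_zero] at h0
      have := norm_le_zero_iff.1 h0
      have : proj (w 1) = w 1 := by
        rwa [sub_eq_zero] at this
      simpa using this
    · have : 1 + s = s + 1 := by omega
      rw [this, (hwp s hs).symm]
  -- z (n+1) as a sum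
  have hzsum : ∀ n, z (n + 1) = w 1 - a • ∑ t ∈ Icc 1 n, g t := by
    intro n
    induction n with
    | zero => simp [hz1]
    | succ n ih =>
        rw [hz (n + 1) (by omega), ih, Finset.sum_Icc_succ_top (by omega : 1 ≤ n + 1)]
        rw [smul_add]
        abel
  -- main telescoping inequality
  have hmain : ∀ n, Ψ (z (n + 1)) ≤
      Ψ (z 1) - a * ∑ t ∈ Icc 1 n, ⟪g t, w t⟫
        + (∑ t ∈ Icc 1 n, ‖g t‖ ^ 2) * a ^ 2 / 2 := by
    intro n
    induction n with
    | zero => simp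
    | succ n ih =>
        have hstep := hdesc (z (n + 1)) (a • g (n + 1))
        rw [← hz (n + 1) (by omega)] at hstep
        rw [hwz (n + 1) (by omega)] at hstep
        have hin : ⟪a • g (n + 1), w (n + 1)⟫ = a * ⟪g (n + 1), w (n + 1)⟫ :=
          real_inner_smul_left _ _ _
        have hnm : ‖a • g (n + 1)‖ ^ 2 = a ^ 2 * ‖g (n + 1)‖ ^ 2 := by
          rw [norm_smul, mul_pow, Real.norm_eq_abs, sq_abs]
        rw [hin, hnm] at hstep
        rw [Finset.sum_Icc_succ_top (by omega : 1 ≤ n + 1),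
          Finset.sum_Icc_succ_top (by omega : 1 ≤ n + 1)]
        nlinarith [ih, hstep]
  -- lower bound on Ψ
  have hlow : ∀ θ, ⟪θ, wstar⟫ - ‖wstar‖ ^ 2 / 2 ≤ Ψ θ := by
    intro θ
    have h := (hproj θ).2 wstar hwstar
    have h2 : ‖proj θ - θ‖ ^ 2 ≤ ‖wstar - θ‖ ^ 2 := by
      nlinarith [norm_nonneg (proj θ - θ), norm_nonneg (wstar - θ)]
    have e : ‖wstar - θ‖ ^ 2 = ‖wstar‖ ^ 2 - 2 * ⟪wstar, θ⟫ + ‖θ‖ ^ 2 :=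
      norm_sub_sq_real _ _
    have ec : ⟪wstar, θ⟫ = ⟪θ, wstar⟫ := real_inner_comm _ _
    simp only [hΨ]
    nlinarith
  -- Ψ (z 1) = ‖w 1‖^2 / 2
  have hΨ1 : Ψ (z 1) = ‖w 1‖ ^ 2 / 2 := by
    have h1 := hwz 1 le_rfl
    simp only [hΨ]
    rw [h1, hz1]
    simp
  -- inner product of z (T+1) with wstar
  have hzin : ⟪z (T + 1), wstar⟫ =
      ⟪w 1, wstar⟫ - a * ∑ t ∈ Icc 1 T, ⟪g t, wstar⟫ := by
    rw [hzsum T, inner_sub_left, real_inner_smul_left, sum_inner]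
  -- sum of squared norms bound
  have hsumsq : ∑ t ∈ Icc 1 T, ‖g t‖ ^ 2 ≤ (T : ℝ) * L ^ 2 := by
    calc ∑ t ∈ Icc 1 T, ‖g t‖ ^ 2 ≤ ∑ t ∈ Icc 1 T, L ^ 2 :=
          Finset.sum_le_sum fun t ht => pow_le_pow_left₀ (norm_nonneg _) (hg t ht) 2
      _ = (T : ℝ) * L ^ 2 := by
          rw [Finset.sum_const, Nat.card_Icc]
          simp [nsmul_eq_mul]
  have hgoal_sum : ∑ t ∈ Icc 1 T, ⟪g t, w t - wstar⟫ =
      (∑ t ∈ Icc 1 T, ⟪g t, w t⟫) - ∑ t ∈ Icc 1 T, ⟪g t, wstar⟫ := by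
    rw [← Finset.sum_sub_distrib]
    exact Finset.sum_congr rfl fun t _ => inner_sub_right _ _ _
  set Sw := ∑ t ∈ Icc 1 T, ⟪g t, w t⟫ with hSw
  set Ss := ∑ t ∈ Icc 1 T, ⟪g t, wstar⟫ with hSs
  have key : a * (Sw - Ss) ≤ ‖w 1 - wstar‖ ^ 2 / 2 + (T : ℝ) * a ^ 2 * L ^ 2 / 2 := by
    have e := norm_sub_sq_real (w 1) wstar
    have h1 := hlow (z (T + 1))
    have h2 := hmain T
    rw [hzin] at h1
    rw [hΨ1] at h2
    have h3 := mul_le_mul_of_nonneg_right hsumsq (sq_nonneg a)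
    have hd : a * (Sw - Ss) = a * Sw - a * Ss := by ring
    rw [hd]
    linarith [h1, h2, e, h3]
  rw [hgoal_sum]
  calc Sw - Ss = (a * (Sw - Ss)) / a := by field_simp
    _ ≤ (‖w 1 - wstar‖ ^ 2 / 2 + (T : ℝ) * a ^ 2 * L ^ 2 / 2) / a :=
        by gcongr
    _ = ‖w 1 - wstar‖ ^ 2 / (2 * a) + (T : ℝ) * a * L ^ 2 / 2 := by
        field_simp
end

section
/- (One-round network-consensus error bound.) Consider z_i(t+1) = ∑_j P_{ij} z_j(t) - a·g_i(t) with P doubly stochastic, ‖g_j(s)‖ ≤ L, step size a > 0, and let z̄(t) = (1/n)∑_i z_i(t). Suppose ‖(1/n)𝟙ᵀ - [Pᵗ]_{i,:}‖₁ ≤ √n(√λ₂)ᵗ with 0 ≤ λ₂ < 1, and ‖z_j(1)‖ ≤ Z for all j, with t ≤ T. Then ‖z_i(t) - z̄(t)‖ ≤ aL·(1 + 2log(T√n)/(1-√λ₂)) + 2aL + 2Z. -/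
open Finset

/-- Key scalar lemma: the sum of truncated mixing coefficients is bounded
by a logarithmic quantity. -/
lemma aux_sum_min {μ : ℝ} (hμ0 : 0 ≤ μ) (hμ1 : μ < 1) (n T m : ℕ)
    (hn : 1 ≤ n) (hT : 1 ≤ T) (hm : m ≤ T) :
    ∑ s ∈ Finset.Ico 1 m, min 2 (Real.sqrt n * μ ^ (m - s)) ≤
      1 + 2 * Real.log ((T : ℝ) * Real.sqrt n) / (1 - μ) := by
  have hμ' : (0:ℝ) < 1 - μ := by linarith
  have hsn1 : (1:ℝ) ≤ Real.sqrt n := by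
    rw [Real.one_le_sqrt]; exact_mod_cast hn
  have hT1 : (1:ℝ) ≤ (T:ℝ) := by exact_mod_cast hT
  have hTpos : (0:ℝ) < T := by linarith
  set B : ℝ := Real.log ((T : ℝ) * Real.sqrt n) / (1 - μ) with hB
  have hlogpos : 0 ≤ Real.log ((T : ℝ) * Real.sqrt n) :=
    Real.log_nonneg (by nlinarith)
  have hB0 : 0 ≤ B := div_nonneg hlogpos hμ'.le
  set S := Finset.Ico 1 m with hS
  set p : ℕ → Prop := fun s => Real.sqrt n * μ ^ (m - s) ≤ 1 / T with hp
  have hdec : DecidablePred p := fun s => inferInstanceAs (Decidable (_ ≤ _))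
  rw [← Finset.sum_filter_add_sum_filter_not S p]
  have h1 : ∑ s ∈ S.filter p, min 2 (Real.sqrt n * μ ^ (m - s)) ≤ 1 := by
    calc ∑ s ∈ S.filter p, min 2 (Real.sqrt n * μ ^ (m - s))
        ≤ ∑ _s ∈ S.filter p, 1 / (T:ℝ) := by
          refine Finset.sum_le_sum fun s hs => ?_
          exact le_trans (min_le_right _ _) (Finset.mem_filter.mp hs).2
      _ = (S.filter p).card * (1 / (T:ℝ)) := by
          rw [Finset.sum_const, nsmul_eq_mul]
      _ ≤ (T:ℝ) * (1 / (T:ℝ)) := by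
          refine mul_le_mul_of_nonneg_right ?_ (by positivity)
          have : (S.filter p).card ≤ S.card := Finset.card_filter_le _ _
          have hSc : S.card ≤ T := by
            simp only [hS, Nat.card_Ico]
            omega
          exact_mod_cast le_trans this hSc
      _ = 1 := by field_simp
  have h2 : ∑ s ∈ S.filter (fun s => ¬ p s), min 2 (Real.sqrt n * μ ^ (m - s))
      ≤ 2 * B := by
    have hcard : ((S.filter (fun s => ¬ p s)).card : ℝ) ≤ B := by
      have hsub : (S.filter (fun s => ¬ p s)).card ≤ (Finset.Icc 1 ⌊B⌋₊).card := by
        apply Finset.card_le_card_of_injOn (fun s => m - s)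
        · intro s hs
          rw [Finset.mem_coe, Finset.mem_filter] at hs
          obtain ⟨hsS, hps⟩ := hs
          rw [hS, Finset.mem_Ico] at hsS
          have hk1 : 1 ≤ m - s := by omega
          simp only [hp] at hps
          push_neg at hps
          -- hps : 1 / T < √n * μ^(m-s)
          set k := m - s with hk
          have hμpos : 0 < μ := by
            rcases lt_or_eq_of_le hμ0 with h | h
            · exact h
            · exfalso
              rw [← h, zero_pow (by omega : k ≠ 0)] at hps
              simp at hps
              nlinarith
          have hkB : (k : ℝ) < B := by
            -- from √n μ^k > 1/T, take logs
            have hx : (0:ℝ) < Real.sqrt n * μ ^ k := by positivity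
            have hlog := Real.log_lt_log (by positivity : (0:ℝ) < 1 / T) hps
            rw [Real.log_div one_ne_zero (ne_of_gt hTpos), Real.log_one,
              Real.log_mul (by positivity) (by positivity), Real.log_pow] at hlog
            have hlogμ : Real.log μ ≤ μ - 1 := Real.log_le_sub_one_of_pos hμpos
            have hkey : (k : ℝ) * (1 - μ) < Real.log ((T:ℝ) * Real.sqrt n) := by
              rw [Real.log_mul (ne_of_gt hTpos) (by positivity)]
              have hk0 : (0:ℝ) ≤ (k:ℝ) := Nat.cast_nonneg k
              nlinarith [hlog, hlogμ]
            rw [hB, lt_div_iff₀ hμ']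
            linarith
          rw [Finset.mem_coe, Finset.mem_Icc]
          constructor
          · exact hk1
          · exact Nat.le_floor hkB.le
        · intro s hs s' hs' hss
          simp only [Finset.coe_filter, Set.mem_setOf_eq, hS, Finset.mem_Ico] at hs hs'
          change m - s = m - s' at hss
          omega
      calc ((S.filter (fun s => ¬ p s)).card : ℝ)
          ≤ ((Finset.Icc 1 ⌊B⌋₊).card : ℝ) := by exact_mod_cast hsub
        _ ≤ B := by
            rw [Nat.card_Icc]
            have := Nat.floor_le hB0
            have : ((⌊B⌋₊ + 1 - 1 : ℕ) : ℝ) ≤ B := by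
              simp only [Nat.add_sub_cancel]
              exact Nat.floor_le hB0
            exact this
    calc ∑ s ∈ S.filter (fun s => ¬ p s), min 2 (Real.sqrt n * μ ^ (m - s))
        ≤ ∑ _s ∈ S.filter (fun s => ¬ p s), 2 := by
          refine Finset.sum_le_sum fun s _ => min_le_left _ _
      _ = ((S.filter (fun s => ¬ p s)).card : ℝ) * 2 := by
          rw [Finset.sum_const, nsmul_eq_mul]
      _ ≤ B * 2 := by nlinarith
      _ = 2 * B := by ring
  have hBr : 2 * Real.log ((T : ℝ) * Real.sqrt n) / (1 - μ) = 2 * B := by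
    rw [hB]; ring
  linarith

/-- One-round network-consensus error bound: each node's accumulated gradient
variable stays close to the network average. -/
theorem stmt_12 {d n : ℕ} (hn : 1 ≤ n) (P : Matrix (Fin n) (Fin n) ℝ)
    (hPnn : ∀ i j, 0 ≤ P i j)
    (hProw : ∀ i, ∑ j, P i j = 1)
    (hPcol : ∀ j, ∑ i, P i j = 1)
    (lam : ℝ) (hlam0 : 0 ≤ lam) (hlam1 : lam < 1)
    (hmix : ∀ t : ℕ, ∀ i, ∑ j, |1 / (n:ℝ) - (P ^ t) i j| ≤
      Real.sqrt n * (Real.sqrt lam) ^ t)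
    (a L Z : ℝ) (ha : 0 < a) (hL : 0 ≤ L) (hZ : 0 ≤ Z)
    (z g : ℕ → Fin n → EuclideanSpace ℝ (Fin d))
    (hg : ∀ s j, ‖g s j‖ ≤ L)
    (hz1 : ∀ j, ‖z 1 j‖ ≤ Z)
    (hupd : ∀ t ≥ 1, ∀ i, z (t + 1) i = (∑ j, P i j • z t j) - a • g t i)
    (T : ℕ) (hT : 1 ≤ T) (t : ℕ) (ht1 : 1 ≤ t) (ht : t ≤ T) (i : Fin n) :
    ‖z t i - (1 / (n:ℝ)) • ∑ j, z t j‖ ≤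
      a * L * (1 + 2 * Real.log ((T : ℝ) * Real.sqrt n) / (1 - Real.sqrt lam))
        + 2 * a * L + 2 * Z := by
  set μ := Real.sqrt lam with hμdef
  have hμ0 : 0 ≤ μ := Real.sqrt_nonneg lam
  have hμ1 : μ < 1 := by
    rw [hμdef]
    have : Real.sqrt lam < Real.sqrt 1 := Real.sqrt_lt_sqrt hlam0 (by linarith)
    simpa using this
  have hnR : (0:ℝ) < n := by exact_mod_cast hn
  -- properties of powers of P
  have hPpow_nn : ∀ m : ℕ, ∀ i j, 0 ≤ (P ^ m) i j := by
    intro m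
    induction m with
    | zero => intro i j; simp [Matrix.one_apply]; split <;> norm_num
    | succ m ih =>
      intro i j
      rw [pow_succ, Matrix.mul_apply]
      exact Finset.sum_nonneg fun k _ => mul_nonneg (ih i k) (hPnn k j)
  have hPpow_row : ∀ m : ℕ, ∀ i, ∑ j, (P ^ m) i j = 1 := by
    intro m
    induction m with
    | zero => intro i; simp [Matrix.one_apply]
    | succ m ih =>
      intro i
      simp only [pow_succ, Matrix.mul_apply]
      rw [Finset.sum_comm]
      calc ∑ k, ∑ j, (P ^ m) i k * P k j
          = ∑ k, (P ^ m) i k * ∑ j, P k j := by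
            refine Finset.sum_congr rfl fun k _ => ?_
            rw [Finset.mul_sum]
        _ = 1 := by simp only [hProw, mul_one]; exact ih i
  have hPpow_col : ∀ m : ℕ, ∀ j, ∑ i, (P ^ m) i j = 1 := by
    intro m
    induction m with
    | zero => intro j; simp [Matrix.one_apply]
    | succ m ih =>
      intro j
      simp only [pow_succ, Matrix.mul_apply]
      rw [Finset.sum_comm]
      calc ∑ k, ∑ i, (P ^ m) i k * P k j
          = ∑ k, (∑ i, (P ^ m) i k) * P k j := by
            refine Finset.sum_congr rfl fun k _ => ?_
            rw [Finset.sum_mul]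
        _ = 1 := by simp only [ih, one_mul]; exact hPcol j
  have habs2 : ∀ m : ℕ, ∀ i, ∑ j, |1 / (n:ℝ) - (P ^ m) i j| ≤ 2 := by
    intro m i
    calc ∑ j, |1 / (n:ℝ) - (P ^ m) i j|
        ≤ ∑ j, (1 / (n:ℝ) + (P ^ m) i j) := by
          refine Finset.sum_le_sum fun j _ => ?_
          rw [abs_sub_comm]
          refine le_trans (abs_sub _ _) ?_
          rw [abs_of_nonneg (hPpow_nn m i j), abs_of_nonneg (by positivity)]
          linarith
      _ = 2 := by
          rw [Finset.sum_add_distrib, Finset.sum_const, hPpow_row m i]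
          simp [Finset.card_univ]
          field_simp
          try norm_num
  -- propagation lemma
  have hprop : ∀ (m : ℕ) (v : Fin n → EuclideanSpace ℝ (Fin d)) (i : Fin n),
      ∑ j, P i j • (∑ k, (P ^ m) j k • v k) = ∑ k, (P ^ (m + 1)) i k • v k := by
    intro m v i
    calc ∑ j, P i j • (∑ k, (P ^ m) j k • v k)
        = ∑ j, ∑ k, (P i j * (P ^ m) j k) • v k := by
          refine Finset.sum_congr rfl fun j _ => ?_
          rw [Finset.smul_sum]
          exact Finset.sum_congr rfl fun k _ => smul_smul _ _ _
      _ = ∑ k, ∑ j, (P i j * (P ^ m) j k) • v k := Finset.sum_comm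
      _ = ∑ k, (P ^ (m + 1)) i k • v k := by
          refine Finset.sum_congr rfl fun k _ => ?_
          rw [← Finset.sum_smul, pow_succ', Matrix.mul_apply]
  -- closed form
  have key : ∀ t : ℕ, 1 ≤ t → ∀ i,
      z t i = (∑ j, (P ^ (t - 1)) i j • z 1 j)
        - a • ∑ s ∈ Finset.Ico 1 t, ∑ j, (P ^ (t - 1 - s)) i j • g s j := by
    intro t ht'
    induction t, ht' using Nat.le_induction with
    | base =>
      intro i
      simp [Matrix.one_apply]
    | succ t ht ih =>
      intro i
      rw [hupd t ht i]
      have hz := fun j => ih j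
      calc (∑ j, P i j • z t j) - a • g t i
          = (∑ j, P i j • ((∑ k, (P ^ (t - 1)) j k • z 1 k)
              - a • ∑ s ∈ Finset.Ico 1 t, ∑ k, (P ^ (t - 1 - s)) j k • g s k))
            - a • g t i := by
            congr 1
            exact Finset.sum_congr rfl fun j _ => by rw [hz j]
        _ = (∑ j, P i j • (∑ k, (P ^ (t - 1)) j k • z 1 k))
            - a • (∑ j, P i j • ∑ s ∈ Finset.Ico 1 t, ∑ k, (P ^ (t - 1 - s)) j k • g s k)
            - a • g t i := by
            congr 1
            rw [Finset.smul_sum, ← Finset.sum_sub_distrib]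
            refine Finset.sum_congr rfl fun j _ => ?_
            rw [smul_sub, smul_comm]
        _ = (∑ j, (P ^ t) i j • z 1 j)
            - a • (∑ s ∈ Finset.Ico 1 t, ∑ k, (P ^ (t - s)) i k • g s k)
            - a • g t i := by
            congr 1
            congr 1
            · have := hprop (t - 1) (z 1) i
              rw [Nat.sub_add_cancel ht] at this
              exact this
            · congr 1
              calc ∑ j, P i j • ∑ s ∈ Finset.Ico 1 t, ∑ k, (P ^ (t - 1 - s)) j k • g s k
                  = ∑ s ∈ Finset.Ico 1 t, ∑ j, P i j • ∑ k, (P ^ (t - 1 - s)) j k • g s k := by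
                    rw [← Finset.sum_comm]
                    refine Finset.sum_congr rfl fun j _ => ?_
                    rw [Finset.smul_sum]
                _ = ∑ s ∈ Finset.Ico 1 t, ∑ k, (P ^ (t - s)) i k • g s k := by
                    refine Finset.sum_congr rfl fun s hs => ?_
                    rw [Finset.mem_Ico] at hs
                    have : t - 1 - s + 1 = t - s := by omega
                    rw [hprop (t - 1 - s) (g s) i, this]
        _ = (∑ j, (P ^ (t + 1 - 1)) i j • z 1 j)
            - a • ∑ s ∈ Finset.Ico 1 (t + 1), ∑ j, (P ^ (t + 1 - 1 - s)) i j • g s j := by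
            have h0 : ∑ j, (P ^ (t - t)) i j • g t j = g t i := by
              simp [Nat.sub_self, Matrix.one_apply]
            simp only [Nat.add_sub_cancel]
            rw [Finset.sum_Ico_succ_top (by omega : 1 ≤ t), smul_add, h0, sub_sub]
  -- the average
  have havg : (1 / (n:ℝ)) • ∑ j, z t j
      = (1 / (n:ℝ)) • ∑ j, z 1 j
        - a • ∑ s ∈ Finset.Ico 1 t, (1 / (n:ℝ)) • ∑ j, g s j := by
    have hsum : ∑ j, z t j
        = (∑ j, z 1 j) - a • ∑ s ∈ Finset.Ico 1 t, ∑ j, g s j := by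
      calc ∑ j, z t j
          = ∑ i, ((∑ j, (P ^ (t - 1)) i j • z 1 j)
            - a • ∑ s ∈ Finset.Ico 1 t, ∑ j, (P ^ (t - 1 - s)) i j • g s j) :=
            Finset.sum_congr rfl fun i _ => key t ht1 i
        _ = (∑ i, ∑ j, (P ^ (t - 1)) i j • z 1 j)
            - a • ∑ i, ∑ s ∈ Finset.Ico 1 t, ∑ j, (P ^ (t - 1 - s)) i j • g s j := by
            rw [Finset.sum_sub_distrib, Finset.smul_sum]
        _ = (∑ j, z 1 j) - a • ∑ s ∈ Finset.Ico 1 t, ∑ j, g s j := by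
            congr 1
            · rw [Finset.sum_comm]
              refine Finset.sum_congr rfl fun j _ => ?_
              rw [← Finset.sum_smul, hPpow_col (t - 1) j, one_smul]
            · congr 1
              rw [Finset.sum_comm]
              refine Finset.sum_congr rfl fun s _ => ?_
              rw [Finset.sum_comm]
              refine Finset.sum_congr rfl fun j _ => ?_
              rw [← Finset.sum_smul, hPpow_col (t - 1 - s) j, one_smul]
    rw [hsum, smul_sub]
    congr 1
    rw [smul_comm, Finset.smul_sum]
  -- the difference
  have hdiff : z t i - (1 / (n:ℝ)) • ∑ j, z t j
      = (∑ j, ((P ^ (t - 1)) i j - 1 / (n:ℝ)) • z 1 j)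
        - a • ∑ s ∈ Finset.Ico 1 t, ∑ j, ((P ^ (t - 1 - s)) i j - 1 / (n:ℝ)) • g s j := by
    rw [key t ht1 i, havg]
    have e1 : ∑ j, ((P ^ (t - 1)) i j - 1 / (n:ℝ)) • z 1 j
        = (∑ j, (P ^ (t - 1)) i j • z 1 j) - (1 / (n:ℝ)) • ∑ j, z 1 j := by
      rw [Finset.smul_sum, ← Finset.sum_sub_distrib]
      exact Finset.sum_congr rfl fun j _ => by rw [sub_smul]
    have e2 : ∀ s, ∑ j, ((P ^ (t - 1 - s)) i j - 1 / (n:ℝ)) • g s j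
        = (∑ j, (P ^ (t - 1 - s)) i j • g s j) - (1 / (n:ℝ)) • ∑ j, g s j := by
      intro s
      rw [Finset.smul_sum, ← Finset.sum_sub_distrib]
      exact Finset.sum_congr rfl fun j _ => by rw [sub_smul]
    rw [e1]
    have e3 : ∑ s ∈ Finset.Ico 1 t, ∑ j, ((P ^ (t - 1 - s)) i j - 1 / (n:ℝ)) • g s j
        = (∑ s ∈ Finset.Ico 1 t, ∑ j, (P ^ (t - 1 - s)) i j • g s j)
          - ∑ s ∈ Finset.Ico 1 t, (1 / (n:ℝ)) • ∑ j, g s j := by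
      rw [← Finset.sum_sub_distrib]
      exact Finset.sum_congr rfl fun s _ => e2 s
    rw [e3, smul_sub]
    abel
  -- norm bound helper
  have hnorm : ∀ (m : ℕ) (v : Fin n → EuclideanSpace ℝ (Fin d)) (C : ℝ), 0 ≤ C →
      (∀ j, ‖v j‖ ≤ C) →
      ‖∑ j, ((P ^ m) i j - 1 / (n:ℝ)) • v j‖ ≤ (∑ j, |1 / (n:ℝ) - (P ^ m) i j|) * C := by
    intro m v C hC hv
    calc ‖∑ j, ((P ^ m) i j - 1 / (n:ℝ)) • v j‖
        ≤ ∑ j, ‖((P ^ m) i j - 1 / (n:ℝ)) • v j‖ := norm_sum_le _ _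
      _ ≤ ∑ j, |1 / (n:ℝ) - (P ^ m) i j| * C := by
          refine Finset.sum_le_sum fun j _ => ?_
          rw [norm_smul, Real.norm_eq_abs, abs_sub_comm]
          exact mul_le_mul_of_nonneg_left (hv j) (abs_nonneg _)
      _ = (∑ j, |1 / (n:ℝ) - (P ^ m) i j|) * C := by rw [Finset.sum_mul]
  -- main estimate
  rw [hdiff]
  have hinit : ‖∑ j, ((P ^ (t - 1)) i j - 1 / (n:ℝ)) • z 1 j‖ ≤ 2 * Z := by
    refine le_trans (hnorm (t - 1) (z 1) Z hZ hz1) ?_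
    exact mul_le_mul_of_nonneg_right (habs2 (t - 1) i) hZ
  set B : ℝ := Real.log ((T : ℝ) * Real.sqrt n) / (1 - μ) with hBdef
  have hμ' : (0:ℝ) < 1 - μ := by linarith
  have hB0 : 0 ≤ B := by
    refine div_nonneg (Real.log_nonneg ?_) hμ'.le
    have hsn1 : (1:ℝ) ≤ Real.sqrt n := by
      rw [Real.one_le_sqrt]; exact_mod_cast hn
    have hT1 : (1:ℝ) ≤ (T:ℝ) := by exact_mod_cast hT
    nlinarith
  have hgrad : ‖∑ s ∈ Finset.Ico 1 t, ∑ j, ((P ^ (t - 1 - s)) i j - 1 / (n:ℝ)) • g s j‖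
      ≤ 2 * L + (1 + 2 * B) * L := by
    have hterm : ∀ s, ‖∑ j, ((P ^ (t - 1 - s)) i j - 1 / (n:ℝ)) • g s j‖
        ≤ (∑ j, |1 / (n:ℝ) - (P ^ (t - 1 - s)) i j|) * L :=
      fun s => hnorm (t - 1 - s) (g s) L hL (hg s)
    rcases Nat.lt_or_ge t 2 with h2 | h2
    · -- t = 1 : the sum is empty
      have : t = 1 := by omega
      subst this
      simp only [Finset.Ico_self, Finset.sum_empty, norm_zero]
      nlinarith
    · -- t ≥ 2 : peel the last term
      have hsplit : (∑ s ∈ Finset.Ico 1 t, ∑ j, ((P ^ (t - 1 - s)) i j - 1 / (n:ℝ)) • g s j)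
          = (∑ s ∈ Finset.Ico 1 (t - 1), ∑ j, ((P ^ (t - 1 - s)) i j - 1 / (n:ℝ)) • g s j)
            + ∑ j, ((P ^ (t - 1 - (t - 1))) i j - 1 / (n:ℝ)) • g (t - 1) j := by
        have h := Finset.sum_Ico_succ_top (by omega : 1 ≤ t - 1)
          (fun s => ∑ j, ((P ^ (t - 1 - s)) i j - 1 / (n:ℝ)) • g s j)
        rwa [show t - 1 + 1 = t by omega] at h
      rw [hsplit]
      refine le_trans (norm_add_le _ _) ?_
      have hlast : ‖∑ j, ((P ^ (t - 1 - (t - 1))) i j - 1 / (n:ℝ)) • g (t - 1) j‖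
          ≤ 2 * L := by
        refine le_trans (hterm (t - 1)) ?_
        exact mul_le_mul_of_nonneg_right (habs2 _ i) hL
      have hrest : ‖∑ s ∈ Finset.Ico 1 (t - 1), ∑ j, ((P ^ (t - 1 - s)) i j - 1 / (n:ℝ)) • g s j‖
          ≤ (1 + 2 * B) * L := by
        calc ‖∑ s ∈ Finset.Ico 1 (t - 1), ∑ j, ((P ^ (t - 1 - s)) i j - 1 / (n:ℝ)) • g s j‖
            ≤ ∑ s ∈ Finset.Ico 1 (t - 1), ‖∑ j, ((P ^ (t - 1 - s)) i j - 1 / (n:ℝ)) • g s j‖ :=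
              norm_sum_le _ _
          _ ≤ ∑ s ∈ Finset.Ico 1 (t - 1), min 2 (Real.sqrt n * μ ^ (t - 1 - s)) * L := by
              refine Finset.sum_le_sum fun s _ => ?_
              refine le_trans (hterm s) ?_
              refine mul_le_mul_of_nonneg_right ?_ hL
              exact le_min (habs2 _ i) (hmix (t - 1 - s) i)
          _ = (∑ s ∈ Finset.Ico 1 (t - 1), min 2 (Real.sqrt n * μ ^ (t - 1 - s))) * L := by
              rw [Finset.sum_mul]
          _ ≤ (1 + 2 * B) * L := by
              refine mul_le_mul_of_nonneg_right ?_ hL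
              refine le_trans (aux_sum_min hμ0 hμ1 n T (t - 1) hn hT (by omega))
                (le_of_eq ?_)
              rw [hBdef]; ring
      linarith
  calc ‖(∑ j, ((P ^ (t - 1)) i j - 1 / (n:ℝ)) • z 1 j)
        - a • ∑ s ∈ Finset.Ico 1 t, ∑ j, ((P ^ (t - 1 - s)) i j - 1 / (n:ℝ)) • g s j‖
      ≤ ‖∑ j, ((P ^ (t - 1)) i j - 1 / (n:ℝ)) • z 1 j‖
        + ‖a • ∑ s ∈ Finset.Ico 1 t, ∑ j, ((P ^ (t - 1 - s)) i j - 1 / (n:ℝ)) • g s j‖ :=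
        norm_sub_le _ _
    _ ≤ 2 * Z + a * (2 * L + (1 + 2 * B) * L) := by
        refine add_le_add hinit ?_
        rw [norm_smul, Real.norm_eq_abs, abs_of_pos ha]
        exact mul_le_mul_of_nonneg_left hgrad ha.le
    _ ≤ a * L * (1 + 2 * Real.log ((T : ℝ) * Real.sqrt n) / (1 - μ)) + 2 * a * L + 2 * Z := by
        have hBr : 2 * Real.log ((T : ℝ) * Real.sqrt n) / (1 - μ) = 2 * B := by
          rw [hBdef]; ring
        rw [hBr]
        nlinarith [ha.le, hL, hB0]
end

section
/- For the lazy projection algorithm with constant step a > 0 on a σ-strongly convex F with L-bounded subgradients, combining the regret bound with strong convexity yields: if E = F(w(1)) - F(w*) then (1/T)∑_{t=1}^T [F(w(t)) - F(w*)] ≤ E/(σ a T) + aL²/2. -/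
open RealInnerProductSpace Finset

set_option maxHeartbeats 1000000

lemma aux_proj_ineq {d : ℕ} {W : Set (EuclideanSpace ℝ (Fin d))} (hW : Convex ℝ W)
    {p x : EuclideanSpace ℝ (Fin d)} (hp : p ∈ W) (hmin : ∀ u ∈ W, ‖p - x‖ ≤ ‖u - x‖)
    {u : EuclideanSpace ℝ (Fin d)} (hu : u ∈ W) :
    ‖p - x‖^2 + ‖u - p‖^2 ≤ ‖u - x‖^2 := by
  have hθ : ∀ θ : ℝ, 0 < θ → θ ≤ 1 → ⟪u - p, x - p⟫ ≤ θ/2 * ‖u - p‖^2 := by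
    intro θ h0 h1
    have hmem : θ • u + (1-θ) • p ∈ W := hW hu hp h0.le (by linarith) (by ring)
    have h2 := hmin _ hmem
    have hc : θ • u + (1-θ) • p - x = θ • (u - p) + (p - x) := by module
    have h3 : ‖p - x‖^2 ≤ ‖θ • (u - p) + (p - x)‖^2 := by
      rw [← hc]; exact pow_le_pow_left₀ (norm_nonneg _) h2 2
    rw [norm_add_sq_real] at h3
    have e1 : ‖θ • (u - p)‖^2 = θ^2 * ‖u - p‖^2 := by
      rw [norm_smul, mul_pow]; simp [abs_of_pos h0]
    have e2 : ⟪θ • (u - p), p - x⟫ = θ * ⟪u - p, p - x⟫ := real_inner_smul_left _ _ _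
    have e3 : ⟪u - p, x - p⟫ = -⟪u - p, p - x⟫ := by
      have : (x - p) = -(p - x) := by abel
      rw [this, inner_neg_right]
    rw [e1, e2] at h3
    rw [e3]
    nlinarith
  have key : ⟪u - p, x - p⟫ ≤ 0 := by
    by_contra hpos
    push_neg at hpos
    set c := ⟪u - p, x - p⟫ with hc
    set N := ‖u - p‖^2 with hN
    have hN0 : 0 ≤ N := sq_nonneg _
    have hθ1 : (0:ℝ) < min 1 (c / (N + 1)) := by
      apply lt_min one_pos; positivity
    have := hθ (min 1 (c / (N + 1))) hθ1 (min_le_left _ _)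
    have h4 : min 1 (c / (N + 1)) ≤ c / (N + 1) := min_le_right _ _
    have h5 : c / (N+1) * N < 2 * c := by
      rw [div_mul_eq_mul_div, div_lt_iff₀ (by linarith)]
      nlinarith
    nlinarith [mul_le_mul_of_nonneg_right h4 hN0]
  have hexp : ‖u - x‖^2 = ‖u - p‖^2 + 2 * ⟪u - p, p - x⟫ + ‖p - x‖^2 := by
    have : u - x = (u - p) + (p - x) := by abel
    rw [this, norm_add_sq_real]
  have e3 : ⟪u - p, x - p⟫ = -⟪u - p, p - x⟫ := by
    have : (x - p) = -(p - x) := by abel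
    rw [this, inner_neg_right]
  rw [e3] at key
  nlinarith


lemma aux_eps {K E : ℝ} (hK : 0 ≤ K)
    (h : ∀ θ : ℝ, 0 < θ → θ ≤ 1 → (1 - θ) * K ≤ E) : K ≤ E := by
  apply le_of_forall_pos_le_add
  intro ε hε
  have hθ : (0:ℝ) < min 1 (ε / (K + 1)) := lt_min one_pos (by positivity)
  have h1 := h _ hθ (min_le_left _ _)
  have h2 : min 1 (ε / (K + 1)) * K ≤ ε / (K + 1) * K :=
    mul_le_mul_of_nonneg_right (min_le_right _ _) hK
  have h3 : ε / (K + 1) * K ≤ ε := by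
    rw [div_mul_eq_mul_div, div_le_iff₀ (by linarith)]
    nlinarith
  nlinarith


/-- Lazy projection with constant step on a σ-strongly convex objective:
combining the regret bound with strong convexity gives
`(1/T) ∑ₜ [F(w(t)) - F(w*)] ≤ (F(w(1)) - F(w*))/(σ a T) + a L²/2`. -/
theorem stmt_19 {d : ℕ} (σ a L : ℝ) (hσ : 0 < σ) (ha : 0 < a) (hL : 0 ≤ L)
    (W : Set (EuclideanSpace ℝ (Fin d)))
    (hWne : W.Nonempty) (hWc : IsClosed W) (hW : Convex ℝ W)
    (F : EuclideanSpace ℝ (Fin d) → ℝ)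
    (hsc : ∀ θ ∈ Set.Icc (0:ℝ) 1, ∀ u ∈ W, ∀ w ∈ W,
      F (θ • u + (1 - θ) • w) ≤ θ * F u + (1 - θ) * F w
        - σ / 2 * θ * (1 - θ) * ‖u - w‖ ^ 2)
    (wstar : EuclideanSpace ℝ (Fin d)) (hwstar : wstar ∈ W)
    (hmin : ∀ v ∈ W, F wstar ≤ F v)
    (proj : EuclideanSpace ℝ (Fin d) → EuclideanSpace ℝ (Fin d))
    (hproj : ∀ x, proj x ∈ W ∧ ∀ u ∈ W, ‖proj x - x‖ ≤ ‖u - x‖)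
    (T : ℕ) (hT : 0 < T)
    (z w g : ℕ → EuclideanSpace ℝ (Fin d))
    (hw1 : w 1 ∈ W) (hz1 : z 1 = w 1)
    (hz : ∀ t ≥ 1, z (t + 1) = z t - a • g t)
    (hwp : ∀ t ≥ 1, w (t + 1) = proj (z (t + 1)))
    (hsub : ∀ t ∈ Finset.Icc 1 T, ∀ v ∈ W, F (w t) + ⟪g t, v - w t⟫ ≤ F v)
    (hgL : ∀ t ∈ Finset.Icc 1 T, ‖g t‖ ≤ L) :
    (1 / (T:ℝ)) * ∑ t ∈ Finset.Icc 1 T, (F (w t) - F wstar) ≤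
      (F (w 1) - F wstar) / (σ * a * (T:ℝ)) + a * L ^ 2 / 2 := by
  -- closed form for z
  have hzcf : ∀ t : ℕ, z (t+1) = w 1 - a • (∑ s ∈ Icc 1 t, g s) := by
    intro t
    induction t with
    | zero => simp [hz1]
    | succ n ih =>
      rw [hz (n+1) (by omega), ih, Finset.sum_Icc_succ_top (by omega)]
      rw [smul_add, sub_sub]
  -- membership
  have hwmem : ∀ t : ℕ, 1 ≤ t → w t ∈ W := by
    intro t ht
    rcases Nat.exists_eq_add_of_le ht with ⟨k, rfl⟩
    cases k with
    | zero => exact hw1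
    | succ n =>
      have : 1 + (n+1) = (n+1) + 1 := by omega
      rw [this, hwp (n+1) (by omega)]
      exact (hproj _).1
  -- potential function
  obtain ⟨Φ, hΦ⟩ : ∃ Φ : ℕ → EuclideanSpace ℝ (Fin d) → ℝ,
      Φ = fun t u => a * ∑ s ∈ Icc 1 t, ⟪g s, u⟫ + ‖u - w 1‖^2/2 := ⟨_, rfl⟩
  have hPhiEq : ∀ t u, Φ t u = ‖u - z (t+1)‖^2/2 +
      (a * ⟪(∑ s ∈ Icc 1 t, g s), w 1⟫ - a^2 * ‖∑ s ∈ Icc 1 t, g s‖^2/2) := by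
    intro t u
    rw [hzcf t]
    set G := ∑ s ∈ Icc 1 t, g s with hG
    have hc : u - (w 1 - a • G) = (u - w 1) + a • G := by abel
    rw [hc, norm_add_sq_real]
    have e1 : ‖a • G‖^2 = a^2 * ‖G‖^2 := by
      rw [norm_smul, mul_pow]; simp [abs_of_pos ha]
    have e2 : ⟪u - w 1, a • G⟫ = a * (⟪G, u⟫ - ⟪G, w 1⟫) := by
      rw [real_inner_smul_right, real_inner_comm, inner_sub_right]
    have e3 : ∑ s ∈ Icc 1 t, ⟪g s, u⟫ = ⟪G, u⟫ := by
      rw [hG, sum_inner]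
    simp only [hΦ, e3]
    rw [e1, e2]
    ring
  -- minimality of w (t+1) for Φ t
  have hPhimin : ∀ t : ℕ, ∀ u ∈ W, Φ t (w (t+1)) + ‖u - w (t+1)‖^2/2 ≤ Φ t u := by
    intro t u hu
    have key : ‖w (t+1) - z (t+1)‖^2 + ‖u - w (t+1)‖^2 ≤ ‖u - z (t+1)‖^2 := by
      cases t with
      | zero =>
        rw [hz1]
        simp
      | succ n =>
        rw [hwp (n+1) (by omega)]
        exact aux_proj_ineq hW (hproj _).1 (hproj _).2 hu
    rw [hPhiEq t u, hPhiEq t (w (t+1))]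
    nlinarith [sq_nonneg ‖w (t+1) - z (t+1)‖]
  -- be-the-leader induction
  have hBTL : ∀ n : ℕ, ∀ u ∈ W,
      a * ∑ t ∈ Icc 1 n, ⟪g t, w (t+1)⟫ + (∑ t ∈ Icc 1 n, ‖w t - w (t+1)‖^2)/2
        + ‖u - w (n+1)‖^2/2 ≤ Φ n u := by
    intro n
    induction n with
    | zero =>
      intro u hu
      simp [hΦ]
    | succ n ih =>
      intro u hu
      have hwn2 : w (n+2) ∈ W := hwmem (n+2) (by omega)
      have h1 := ih (w (n+2)) hwn2
      have hrev : ‖w (n+2) - w (n+1)‖ = ‖w (n+1) - w (n+2)‖ := norm_sub_rev _ _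
      rw [hrev] at h1
      have h2 : Φ n (w (n+2)) + a * ⟪g (n+1), w (n+2)⟫ = Φ (n+1) (w (n+2)) := by
        simp only [hΦ]
        rw [Finset.sum_Icc_succ_top (by omega : 1 ≤ n+1)]
        ring
      have h3 := hPhimin (n+1) u hu
      have e : n + 1 + 1 = n + 2 := by omega
      rw [e] at h3
      rw [Finset.sum_Icc_succ_top (by omega : 1 ≤ n+1),
          Finset.sum_Icc_succ_top (by omega : 1 ≤ n+1), e]
      linarith
  -- strong convexity bound on initial distance
  have hEnn : 0 ≤ F (w 1) - F wstar := by linarith [hmin (w 1) hw1]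
  have hsc2 : σ/2 * ‖w 1 - wstar‖^2 ≤ F (w 1) - F wstar := by
    apply aux_eps (by positivity)
    intro θ h0 h1
    have hmem : θ • w 1 + (1-θ) • wstar ∈ W := hW hw1 hwstar h0.le (by linarith) (by ring)
    have h2 := hsc θ ⟨h0.le, h1⟩ (w 1) hw1 wstar hwstar
    have h3 := hmin _ hmem
    nlinarith
  -- per-term subgradient bound
  have hsub2 : ∀ t ∈ Icc 1 T, F (w t) - F wstar ≤ ⟪g t, w t - wstar⟫ := by
    intro t ht
    have := hsub t ht wstar hwstar
    have e : ⟪g t, wstar - w t⟫ = -⟪g t, w t - wstar⟫ := by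
      have h : wstar - w t = -(w t - wstar) := by abel
      rw [h, inner_neg_right]
    rw [e] at this
    linarith
  -- split inner products
  have hsplit : ∀ t ∈ Icc 1 T, ⟪g t, w t - wstar⟫ =
      ⟪g t, w t - w (t+1)⟫ + ⟪g t, w (t+1) - wstar⟫ := by
    intro t ht
    rw [← inner_add_right]
    congr 1
    abel
  -- stability bound per term
  have hstab : ∀ t ∈ Icc 1 T, ⟪g t, w t - w (t+1)⟫ ≤
      a * L^2/2 + ‖w t - w (t+1)‖^2/(2*a) := by
    intro t ht
    have h1 : ⟪g t, w t - w (t+1)⟫ ≤ ‖g t‖ * ‖w t - w (t+1)‖ :=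
      real_inner_le_norm _ _
    have h2 := hgL t ht
    have h3 : ‖g t‖ * ‖w t - w (t+1)‖ ≤ L * ‖w t - w (t+1)‖ :=
      mul_le_mul_of_nonneg_right h2 (norm_nonneg _)
    have h4 : L * ‖w t - w (t+1)‖ ≤ a * L^2/2 + ‖w t - w (t+1)‖^2/(2*a) := by
      rw [div_add_div _ _ (by norm_num : (2:ℝ) ≠ 0) (by positivity : 2*a ≠ 0)]
      rw [le_div_iff₀ (by positivity)]
      nlinarith [sq_nonneg (a * L - ‖w t - w (t+1)‖)]
    linarith
  -- combine: regret bound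
  have hBTLw := hBTL T wstar hwstar
  have hPhiW : Φ T wstar = a * ∑ s ∈ Icc 1 T, ⟪g s, wstar⟫ + ‖wstar - w 1‖^2/2 := by
    rw [hΦ]
  have hsum1 : ∑ t ∈ Icc 1 T, (F (w t) - F wstar) ≤
      ∑ t ∈ Icc 1 T, (⟪g t, w t - w (t+1)⟫ + ⟪g t, w (t+1) - wstar⟫) := by
    apply Finset.sum_le_sum
    intro t ht
    rw [← hsplit t ht]
    exact hsub2 t ht
  have hsum2 : ∑ t ∈ Icc 1 T, ⟪g t, w t - w (t+1)⟫ ≤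
      (T:ℝ) * (a * L^2/2) + (∑ t ∈ Icc 1 T, ‖w t - w (t+1)‖^2)/(2*a) := by
    calc ∑ t ∈ Icc 1 T, ⟪g t, w t - w (t+1)⟫
        ≤ ∑ t ∈ Icc 1 T, (a * L^2/2 + ‖w t - w (t+1)‖^2/(2*a)) :=
          Finset.sum_le_sum hstab
      _ = (T:ℝ) * (a * L^2/2) + (∑ t ∈ Icc 1 T, ‖w t - w (t+1)‖^2)/(2*a) := by
          rw [Finset.sum_add_distrib, Finset.sum_const, Nat.card_Icc, nsmul_eq_mul,
            Finset.sum_div, ← Finset.sum_div]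
          norm_num
  have hsum3 : ∑ t ∈ Icc 1 T, ⟪g t, w (t+1) - wstar⟫ =
      ∑ t ∈ Icc 1 T, ⟪g t, w (t+1)⟫ - ∑ t ∈ Icc 1 T, ⟪g t, wstar⟫ := by
    rw [← Finset.sum_sub_distrib]
    apply Finset.sum_congr rfl
    intro t ht
    rw [inner_sub_right]
  -- main regret inequality
  have hsq : 0 ≤ ‖wstar - w (T+1)‖^2/2 := by positivity
  have hreg : ∑ t ∈ Icc 1 T, (F (w t) - F wstar) ≤
      ‖wstar - w 1‖^2/(2*a) + (T:ℝ) * (a * L^2/2) := by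
    have hb : a * ∑ t ∈ Icc 1 T, ⟪g t, w (t+1)⟫ + (∑ t ∈ Icc 1 T, ‖w t - w (t+1)‖^2)/2
        ≤ a * ∑ s ∈ Icc 1 T, ⟪g s, wstar⟫ + ‖wstar - w 1‖^2/2 := by
      rw [hPhiW] at hBTLw
      linarith
    have hb2 : ∑ t ∈ Icc 1 T, ⟪g t, w (t+1)⟫ - ∑ s ∈ Icc 1 T, ⟪g s, wstar⟫
        ≤ ‖wstar - w 1‖^2/(2*a) - (∑ t ∈ Icc 1 T, ‖w t - w (t+1)‖^2)/(2*a) := by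
      rw [← sub_div, le_div_iff₀ (by positivity : (0:ℝ) < 2*a)]
      nlinarith
    rw [Finset.sum_add_distrib] at hsum1
    rw [hsum3] at hsum1
    have := hsum2
    linarith
  -- finish
  have hdist : ‖wstar - w 1‖^2 ≤ 2 * (F (w 1) - F wstar) / σ := by
    have : ‖wstar - w 1‖ = ‖w 1 - wstar‖ := norm_sub_rev _ _
    rw [this, le_div_iff₀ hσ]
    nlinarith
  have hT' : (0:ℝ) < T := by exact_mod_cast hT
  have hfinal : ∑ t ∈ Icc 1 T, (F (w t) - F wstar) ≤
      (F (w 1) - F wstar) / (σ * a) + (T:ℝ) * (a * L^2/2) := by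
    have h1 : ‖wstar - w 1‖^2/(2*a) ≤ (F (w 1) - F wstar) / (σ * a) := by
      rw [div_le_div_iff₀ (by positivity) (by positivity)]
      calc ‖wstar - w 1‖^2 * (σ * a) ≤ (2 * (F (w 1) - F wstar) / σ) * (σ * a) := by
            apply mul_le_mul_of_nonneg_right hdist (by positivity)
        _ = (F (w 1) - F wstar) * (2*a) := by field_simp
    linarith
  calc (1 / (T:ℝ)) * ∑ t ∈ Icc 1 T, (F (w t) - F wstar)
      ≤ (1 / (T:ℝ)) * ((F (w 1) - F wstar) / (σ * a) + (T:ℝ) * (a * L^2/2)) := by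
        apply mul_le_mul_of_nonneg_left hfinal (by positivity)
    _ = (F (w 1) - F wstar) / (σ * a * (T:ℝ)) + a * L ^ 2 / 2 := by
        field_simp
end
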